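/- Let θ > 0, n ≥ 1, h ≥ θn - 1/2, and let λ = (λ_1 ≥ ... ≥ λ_n ≥ 0) be a partition with nonnegative integer parts. Define A = Σ_{i=1}^n [ (λ_i + h - θi)^2 - (h - θi)^2 ] and B = Σ_i [ (λ_i+h-θi)^2 - (h-θi)^2 ][ (λ_i+h-θi)^2 - (h-θi+1)^2 ] + (2θ/(1+θ)) Σ_{i<j} [ (λ_j+h-θj)^2 - (h-θj)^2 ][ (λ_i+h-θi)^2 - (h-θi+1)^2 ]. Then B ≤ A^2. -/

import Mathlib

lemma sq_sum_expand (a : ℕ → ℝ) (n : ℕ) :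
    (∑ i ∈ Finset.range n, a i) ^ 2
      = ∑ i ∈ Finset.range n, (a i) ^ 2
        + 2 * ∑ i ∈ Finset.range n, ∑ j ∈ Finset.Ioo i n, a i * a j := by
  induction n with
  | zero => simp
  | succ n ih =>
    have h1 : Finset.Ioo n (n + 1) = ∅ := by
      simp [Finset.eq_empty_iff_forall_notMem]
    have h2 : ∑ i ∈ Finset.range (n + 1), ∑ j ∈ Finset.Ioo i (n + 1), a i * a j
        = (∑ i ∈ Finset.range n, ∑ j ∈ Finset.Ioo i n, a i * a j)
          + (∑ i ∈ Finset.range n, a i) * a n := by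
      rw [Finset.sum_range_succ, h1, Finset.sum_empty, add_zero, Finset.sum_mul]
      rw [← Finset.sum_add_distrib]
      refine Finset.sum_congr rfl fun i hi => ?_
      have hi' : i < n := Finset.mem_range.mp hi
      have : Finset.Ioo i (n + 1) = insert n (Finset.Ioo i n) := by
        ext j; simp [Finset.mem_Ioo, Finset.mem_insert]; omega
      rw [this, Finset.sum_insert (by simp [Finset.mem_Ioo])]
      ring
    rw [Finset.sum_range_succ, Finset.sum_range_succ (fun i => (a i) ^ 2), h2]
    linear_combination ih

/-- Lemma 4.1: with `θ > 0`, `h ≥ θn - 1/2`, and a partition `λ` (encoded by the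
antitone `l : ℕ → ℕ`, `l i` being the `(i+1)`-st part), the evaluations
`B = I_{(2)}(λ)` and `A = I_{(1)}(λ)` (given by the combinatorial formula)
satisfy `B ≤ A²`. -/
theorem stmt2 (θ h : ℝ) (hθ : 0 < θ) (n : ℕ) (hn : 1 ≤ n) (hh : θ * n - 1/2 ≤ h)
    (l : ℕ → ℕ) (hmono : Antitone l) :
    (∑ i ∈ Finset.range n,
        (((l i : ℝ) + h - θ * (i + 1)) ^ 2 - (h - θ * (i + 1)) ^ 2) *
          (((l i : ℝ) + h - θ * (i + 1)) ^ 2 - (h - θ * (i + 1) + 1) ^ 2))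
      + (2 * θ / (1 + θ)) *
        ∑ i ∈ Finset.range n, ∑ j ∈ Finset.Ioo i n,
          (((l j : ℝ) + h - θ * (j + 1)) ^ 2 - (h - θ * (j + 1)) ^ 2) *
            (((l i : ℝ) + h - θ * (i + 1)) ^ 2 - (h - θ * (i + 1) + 1) ^ 2)
      ≤ (∑ i ∈ Finset.range n,
          (((l i : ℝ) + h - θ * (i + 1)) ^ 2 - (h - θ * (i + 1)) ^ 2)) ^ 2 := by
  set a : ℕ → ℝ := fun i => ((l i : ℝ) + h - θ * (i + 1)) ^ 2 - (h - θ * (i + 1)) ^ 2 with ha_def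
  set c : ℕ → ℝ := fun i => ((l i : ℝ) + h - θ * (i + 1)) ^ 2 - (h - θ * (i + 1) + 1) ^ 2 with hc_def
  -- d_i ≥ -1/2 for i < n
  have hd : ∀ i, i < n → -(1/2 : ℝ) ≤ h - θ * (i + 1) := by
    intro i hi
    have h1 : ((i : ℝ) + 1) ≤ (n : ℝ) := by exact_mod_cast hi
    nlinarith [mul_le_mul_of_nonneg_left h1 hθ.le]
  have ha : ∀ i, i < n → 0 ≤ a i := by
    intro i hi
    have hd' := hd i hi
    have hx : (0 : ℝ) ≤ (l i : ℝ) := by positivity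
    have : a i = (l i : ℝ) * ((l i : ℝ) + 2 * (h - θ * (i + 1))) := by
      simp only [ha_def]; ring
    rw [this]
    rcases Nat.eq_zero_or_pos (l i) with h0 | h0
    · simp [h0]
    · have hx1 : (1 : ℝ) ≤ (l i : ℝ) := by exact_mod_cast h0
      nlinarith
  have hca : ∀ i, i < n → c i ≤ a i := by
    intro i hi
    have hd' := hd i hi
    simp only [ha_def, hc_def]
    nlinarith
  set k : ℝ := 2 * θ / (1 + θ) with hk_def
  have hk0 : 0 ≤ k := by positivity
  have hk2 : k ≤ 2 := by
    rw [hk_def, div_le_iff₀ (by linarith)]; nlinarith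
  have hkc : ∀ i, i < n → k * c i ≤ 2 * a i := by
    intro i hi
    rcases le_or_gt 0 (c i) with h0 | h0
    · calc k * c i ≤ 2 * c i := by nlinarith
        _ ≤ 2 * a i := by nlinarith [hca i hi]
    · nlinarith [ha i hi]
  rw [sq_sum_expand]
  have h1 : ∑ i ∈ Finset.range n, a i * c i ≤ ∑ i ∈ Finset.range n, (a i) ^ 2 := by
    refine Finset.sum_le_sum fun i hi => ?_
    have hi' := Finset.mem_range.mp hi
    have := hca i hi'
    nlinarith [ha i hi']
  have h2 : k * ∑ i ∈ Finset.range n, ∑ j ∈ Finset.Ioo i n, a j * c i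
      ≤ 2 * ∑ i ∈ Finset.range n, ∑ j ∈ Finset.Ioo i n, a i * a j := by
    rw [Finset.mul_sum, Finset.mul_sum]
    refine Finset.sum_le_sum fun i hi => ?_
    rw [Finset.mul_sum, Finset.mul_sum]
    refine Finset.sum_le_sum fun j hj => ?_
    have hi' := Finset.mem_range.mp hi
    have hj' := (Finset.mem_Ioo.mp hj).2
    have h3 := hkc i hi'
    have h4 := ha j hj'
    nlinarith
  linarith
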